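/- Let G be a group, K a subgroup, ρ an irreducible unitary representation of G on a complex Hilbert space H, and P the orthogonal projection onto the subspace V of K-fixed vectors. If the compressed operators P ρ(g) P pairwise commute, i.e. P ρ(g) P ρ(g') P = P ρ(g') P ρ(g) P for all g, g' ∈ G, then the subspace V of K-fixed vectors has dimension at most 1. -/

import Mathlib

open scoped InnerProductSpace
open Cardinal

lemma isClosed_starCentralizer {A : Type*} [NormedRing A] [StarRing A] [NormedAlgebra ℂ A]
    [StarModule ℂ A] (s : Set A) :
    IsClosed ((StarSubalgebra.centralizer ℂ s : StarSubalgebra ℂ A) : Set A) := by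
  rw [StarSubalgebra.coe_centralizer]
  have h : (s ∪ star s).centralizer = ⋂ m ∈ (s ∪ star s), {z : A | m * z = z * m} := by
    ext z; simp [Set.mem_centralizer_iff]
  rw [h]
  exact isClosed_biInter fun m _ => isClosed_eq (continuous_mul_left m) (continuous_mul_right m)

set_option maxHeartbeats 1600000 in
lemma scalar_of_commuting_irreducible {E : Type*} [NormedAddCommGroup E]
    [InnerProductSpace ℂ E] [CompleteSpace E] [Nontrivial E] {ι : Type*}
    (T : ι → E →L[ℂ] E) (a : E →L[ℂ] E) [ha : IsStarNormal a]
    (hTa : ∀ i, Commute (T i) a) (hTa' : ∀ i, Commute (T i) (star a))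
    (hirr : ∀ W : Submodule ℂ E, IsClosed (W : Set E) → W ≠ ⊥ →
      (∀ i, ∀ w ∈ W, T i w ∈ W) → W = ⊤) :
    ∃ c : ℂ, a = algebraMap ℂ (E →L[ℂ] E) c := by
  by_cases hsub : (spectrum ℂ a).Subsingleton
  · obtain ⟨z, hz⟩ := spectrum.nonempty a
    refine ⟨z, ?_⟩
    conv_lhs => rw [← cfc_id ℂ a]
    rw [← cfc_const z a]
    exact cfc_congr fun w hw => hsub hw hz
  · exfalso
    rw [Set.not_subsingleton_iff] at hsub
    obtain ⟨z1, hz1, z2, hz2, hne⟩ := hsub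
    set r : ℝ := dist z1 z2 / 2 with hr
    have hrpos : 0 < r := by
      have := dist_pos.mpr hne
      positivity
    set f : ℂ → ℂ := fun z => ((max 0 (r - dist z z1) : ℝ) : ℂ) with hf
    set f' : ℂ → ℂ := fun z => ((max 0 (r - dist z z2) : ℝ) : ℂ) with hf'
    have hfc : Continuous f := by fun_prop
    have hfc' : Continuous f' := by fun_prop
    have hfz1 : f z1 = (r : ℂ) := by simp [hf, hrpos.le]
    have hfz2 : f' z2 = (r : ℂ) := by simp [hf', hrpos.le]
    have hmul : ∀ z, f z * f' z = 0 := by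
      intro z
      rcases le_or_gt (r - dist z z1) 0 with h | h
      · have : f z = 0 := by simp [hf, max_eq_left h]
        rw [this, zero_mul]
      · have hd : r - dist z z2 ≤ 0 := by
          have h1 : dist z1 z2 ≤ dist z1 z + dist z z2 := dist_triangle _ _ _
          have h2 : dist z z1 < r := by linarith
          rw [dist_comm z1 z] at h1
          have : dist z1 z2 = 2 * r := by rw [hr]; ring
          linarith
        have : f' z = 0 := by simp [hf', max_eq_left hd]
        rw [this, mul_zero]
    set b := cfc f a with hb
    set c := cfc f' a with hc
    have hb_ne : b ≠ 0 := by
      intro h0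
      have hsp : f z1 ∈ spectrum ℂ b := by
        rw [hb, cfc_map_spectrum f a]
        exact ⟨z1, hz1, rfl⟩
      rw [h0, spectrum.zero_eq] at hsp
      rw [hfz1] at hsp
      simp only [Set.mem_singleton_iff, Complex.ofReal_eq_zero] at hsp
      exact hrpos.ne' hsp
    have hc_ne : c ≠ 0 := by
      intro h0
      have hsp : f' z2 ∈ spectrum ℂ c := by
        rw [hc, cfc_map_spectrum f' a]
        exact ⟨z2, hz2, rfl⟩
      rw [h0, spectrum.zero_eq] at hsp
      rw [hfz2] at hsp
      simp only [Set.mem_singleton_iff, Complex.ofReal_eq_zero] at hsp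
      exact hrpos.ne' hsp
    have hbc : b * c = 0 := by
      rw [hb, hc, ← cfc_mul f f' a hfc.continuousOn hfc'.continuousOn]
      have : (fun z => f z * f' z) = (fun _ : ℂ => (0 : ℂ)) := funext hmul
      rw [this, cfc_const_zero]
    have hcb : c * b = 0 := by
      have hco : Commute b c := cfc_commute_cfc f f' a
      rw [← hco.eq, hbc]
    have hcomm_c : ∀ i, Commute (T i) c := by
      intro i
      have hmem : c ∈ StarAlgebra.elemental ℂ a := by
        rw [hc, cfc_apply f' a (hf := hfc'.continuousOn), cfcHom_eq_of_isStarNormal]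
        exact ((continuousFunctionalCalculus a) _).2
      have hle : StarAlgebra.elemental ℂ a ≤ StarSubalgebra.centralizer ℂ ({T i} : Set _) := by
        apply StarAlgebra.elemental.le_of_mem (isClosed_starCentralizer _)
        rw [StarSubalgebra.mem_centralizer_iff]
        rintro y rfl
        exact ⟨(hTa i).eq, by
          have := (hTa' i).eq
          -- star (T i) * a = a * star (T i)
          have h2 : Commute (star a) (T i) := (hTa' i).symm
          have h3 : Commute a (star (T i)) := by
            simpa using h2.star_star
          exact h3.symm.eq⟩
      have := hle hmem
      rw [StarSubalgebra.mem_centralizer_iff] at this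
      exact (this (T i) rfl).1
    -- the kernel of c is a proper nonzero closed invariant subspace
    set Wk : Submodule ℂ E := LinearMap.ker c.toLinearMap with hWk
    have hWkc : IsClosed (Wk : Set E) := ContinuousLinearMap.isClosed_ker c
    have hWkne : Wk ≠ ⊥ := by
      have : ∃ x : E, b x ≠ 0 := by
        by_contra hno
        push_neg at hno
        exact hb_ne (by ext x; simpa using hno x)
      obtain ⟨x, hx⟩ := this
      intro hbot
      have hmem : b x ∈ Wk := by
        rw [hWk, LinearMap.mem_ker, ContinuousLinearMap.coe_coe]
        have : c (b x) = (c * b) x := rfl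
        rw [this, hcb]
        rfl
      rw [hbot, Submodule.mem_bot] at hmem
      exact hx hmem
    have hWkinv : ∀ i, ∀ w ∈ Wk, T i w ∈ Wk := by
      intro i w hw
      rw [hWk, LinearMap.mem_ker, ContinuousLinearMap.coe_coe] at hw ⊢
      have h1 : c (T i w) = (c * T i) w := rfl
      rw [h1, ← (hcomm_c i).eq]
      have h2 : (T i * c) w = T i (c w) := rfl
      rw [h2, hw, map_zero]
    have := hirr Wk hWkc hWkne hWkinv
    apply hc_ne
    ext x
    have hx : x ∈ Wk := this ▸ Submodule.mem_top
    rw [hWk, LinearMap.mem_ker] at hx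
    simpa using hx

theorem rank_fixed_le_one_of_commuting_compressions
    {G : Type*} [Group G] (K : Subgroup G) {H : Type*}
    [NormedAddCommGroup H] [InnerProductSpace ℂ H] [CompleteSpace H]
    (ρ : G →* (H ≃ₗᵢ[ℂ] H))
    (hirr : ∀ W : Submodule ℂ H, IsClosed (W : Set H) →
      (∀ (g : G), ∀ w ∈ W, ρ g w ∈ W) → W = ⊥ ∨ W = ⊤)
    (V : Submodule ℂ H) (hV : ∀ x : H, x ∈ V ↔ ∀ h ∈ K, ρ h x = x)
    (P : H →L[ℂ] H) (hPmem : ∀ x : H, P x ∈ V) (hPfix : ∀ x ∈ V, P x = x)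
    (hPorth : ∀ x : H, x - P x ∈ Vᗮ)
    (hcomm : ∀ (g g' : G) (x : H),
      P (ρ g (P (ρ g' (P x)))) = P (ρ g' (P (ρ g (P x))))) :
    Module.rank ℂ V ≤ 1 := by
  classical
  have hVclosed : IsClosed (V : Set H) := by
    have heq : (V : Set H) = ⋂ h ∈ K, {x : H | ρ h x = x} := by
      ext x
      simp only [SetLike.mem_coe, hV x, Set.mem_iInter, Set.mem_setOf_eq]
    rw [heq]
    exact isClosed_biInter fun h _ => isClosed_eq (ρ h).continuous continuous_id
  haveI : CompleteSpace V := hVclosed.completeSpace_coe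
  by_cases hvex : ∃ v : V, v ≠ 0
  swap
  · push_neg at hvex
    haveI : Subsingleton V := ⟨fun a b => by rw [hvex a, hvex b]⟩
    rw [rank_subsingleton']
    exact zero_le_one
  obtain ⟨v0, hv0⟩ := hvex
  haveI : Nontrivial V := ⟨v0, 0, hv0⟩
  -- the compressed operators on V
  set Aop : G → (V →L[ℂ] V) := fun g =>
    (P.comp (((ρ g).toLinearIsometry.toContinuousLinearMap).comp V.subtypeL)).codRestrict V
      (fun x => hPmem _) with hAopdef
  have hAop : ∀ (g : G) (x : V), (Aop g x : H) = P (ρ g (x : H)) := fun g x => rfl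
  -- inner product facts
  have hPV : ∀ (y : H), ∀ v ∈ V, ⟪v, y⟫_ℂ = ⟪v, P y⟫_ℂ := by
    intro y v hv
    have h0 : ⟪v, y - P y⟫_ℂ = 0 := (Submodule.mem_orthogonal _ _).mp (hPorth y) v hv
    rw [inner_sub_right, sub_eq_zero] at h0
    exact h0
  have hPV' : ∀ (y : H), ∀ v ∈ V, ⟪P y, v⟫_ℂ = ⟪y, v⟫_ℂ := by
    intro y v hv
    calc ⟪P y, v⟫_ℂ = starRingEnd ℂ ⟪v, P y⟫_ℂ := (inner_conj_symm _ _).symm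
      _ = starRingEnd ℂ ⟪v, y⟫_ℂ := by rw [← hPV y v hv]
      _ = ⟪y, v⟫_ℂ := inner_conj_symm _ _
  -- the compressions commute
  have hA_comm : ∀ g g' : G, Commute (Aop g) (Aop g') := by
    intro g g'
    have : ∀ (x : V), Aop g (Aop g' x) = Aop g' (Aop g x) := by
      intro x
      apply Subtype.ext
      have hx : P (x : H) = (x : H) := hPfix _ x.2
      have e1 : (Aop g (Aop g' x) : H) = P (ρ g (P (ρ g' (P (x : H))))) := by
        rw [hAop, hAop, hx]
      have e2 : (Aop g' (Aop g x) : H) = P (ρ g' (P (ρ g (P (x : H))))) := by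
        rw [hAop, hAop, hx]
      rw [e1, e2]
      exact hcomm g g' x
    ext x
    simp only [ContinuousLinearMap.mul_apply]
    exact congrArg Subtype.val (this x)
  -- adjoints
  have hρ_inv : ∀ (g : G) (x : H), ρ g (ρ g⁻¹ x) = x := by
    intro g x
    have : ρ g * ρ g⁻¹ = 1 := by rw [← map_mul, mul_inv_cancel, map_one]
    calc ρ g (ρ g⁻¹ x) = (ρ g * ρ g⁻¹) x := rfl
      _ = x := by rw [this]; rfl
  have hA_adj : ∀ g : G, ContinuousLinearMap.adjoint (Aop g) = Aop g⁻¹ := by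
    intro g
    symm
    rw [ContinuousLinearMap.eq_adjoint_iff]
    intro x y
    rw [Submodule.coe_inner, Submodule.coe_inner, hAop, hAop]
    rw [hPV' _ _ y.2, ← hPV _ _ x.2]
    calc ⟪ρ g⁻¹ (x : H), (y : H)⟫_ℂ
        = ⟪ρ g (ρ g⁻¹ (x : H)), ρ g (y : H)⟫_ℂ := ((ρ g).inner_map_map _ _).symm
      _ = ⟪(x : H), ρ g (y : H)⟫_ℂ := by rw [hρ_inv]
  have hA_star : ∀ g : G, star (Aop g) = Aop g⁻¹ := by
    intro g
    rw [ContinuousLinearMap.star_eq_adjoint, hA_adj]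
  -- key: irreducibility2 transferred to V
  have key : ∀ W : Submodule ℂ V, IsClosed (W : Set V) → W ≠ ⊥ →
      (∀ g : G, ∀ w ∈ W, Aop g w ∈ W) → W = ⊤ := by
    intro W hWc hWne hWinv
    set Wh : Submodule ℂ H := W.map V.subtype with hWhdef
    have hWhclosed : IsClosed (Wh : Set H) := by
      have heq : (Wh : Set H) = (Subtype.val : V → H) '' (W : Set V) := by
        ext x
        simp only [hWhdef, Submodule.map_coe, Submodule.coe_subtype]
      rw [heq]
      exact hVclosed.isClosedEmbedding_subtypeVal.isClosedMap _ hWc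
    set S : Set H := ⋃ g : G, (ρ g) '' (Wh : Set H) with hSdef
    set U0 : Submodule ℂ H := Submodule.span ℂ S with hU0def
    have hWhU0 : Wh ≤ U0 := by
      intro x hx
      apply Submodule.subset_span
      refine Set.mem_iUnion.mpr ⟨1, ⟨x, hx, ?_⟩⟩
      rw [map_one]; rfl
    have hU0inv : ∀ g : G, ∀ w ∈ U0, ρ g w ∈ U0 := by
      intro g w hw
      refine Submodule.span_induction ?_ ?_ ?_ ?_ hw
      · rintro x hx
        rw [hSdef] at hx
        obtain ⟨g', y, hy, rfl⟩ := Set.mem_iUnion.mp hx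
        apply Submodule.subset_span
        refine Set.mem_iUnion.mpr ⟨g * g', ⟨y, hy, ?_⟩⟩
        rw [map_mul]; rfl
      · simp
      · intro x y _ _ hx hy
        rw [map_add]; exact U0.add_mem hx hy
      · intro c x _ hx
        rw [map_smul]; exact U0.smul_mem c hx
    have hU0cl : ∀ g : G, ∀ w ∈ U0.topologicalClosure, ρ g w ∈ U0.topologicalClosure := by
      intro g w hw
      have hw' : w ∈ closure (U0 : Set H) := hw
      have h1 : ρ g w ∈ closure (⇑(ρ g) '' (U0 : Set H)) :=
        image_closure_subset_closure_image (ρ g).continuous ⟨w, hw', rfl⟩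
      have h2 : closure (⇑(ρ g) '' (U0 : Set H)) ⊆ closure (U0 : Set H) := by
        apply closure_mono
        rintro y ⟨x, hx, rfl⟩
        exact hU0inv g x hx
      exact h2 h1
    rcases hirr U0.topologicalClosure U0.isClosed_topologicalClosure hU0cl with hbot | htop
    · exfalso
      obtain ⟨x, hxW, hxne⟩ := Submodule.exists_mem_ne_zero_of_ne_bot hWne
      have hmem : (x : H) ∈ U0.topologicalClosure :=
        U0.le_topologicalClosure (hWhU0 ⟨x, hxW, rfl⟩)
      rw [hbot, Submodule.mem_bot] at hmem
      exact hxne (Subtype.ext hmem)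
    · have hPU0 : ∀ x ∈ U0, P x ∈ Wh := by
        intro x hx
        refine Submodule.span_induction ?_ ?_ ?_ ?_ hx
        · rintro y hy
          rw [hSdef] at hy
          obtain ⟨g, z, hz, rfl⟩ := Set.mem_iUnion.mp hy
          obtain ⟨w', hw', rfl⟩ := hz
          have : P (ρ g (V.subtype w')) = (Aop g w' : H) := (hAop g w').symm
          rw [this]
          exact ⟨Aop g w', hWinv g w' hw', rfl⟩
        · simp
        · intro a b _ _ ha hb
          rw [map_add]; exact Wh.add_mem ha hb
        · intro c a _ ha
          rw [map_smul]; exact Wh.smul_mem c ha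
      have hVW : ∀ v : V, (v : H) ∈ Wh := by
        intro v
        have hvU : (v : H) ∈ closure (U0 : Set H) := by
          have hm : (v : H) ∈ U0.topologicalClosure := by rw [htop]; trivial
          exact hm
        have h1 : P (v : H) ∈ closure ((P : H → H) '' (U0 : Set H)) :=
          image_closure_subset_closure_image P.continuous ⟨v, hvU, rfl⟩
        have h2 : closure ((P : H → H) '' (U0 : Set H)) ⊆ (Wh : Set H) := by
          apply closure_minimal ?_ hWhclosed
          rintro y ⟨x, hx, rfl⟩
          exact hPU0 x hx
        have h3 := h2 h1
        rwa [hPfix _ v.2] at h3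
      rw [eq_top_iff]
      intro x _
      obtain ⟨y, hyW, hyx⟩ := hVW x
      have : y = x := Subtype.ext hyx
      rwa [← this]
  -- every compression is a scalar on V
  have hscalar : ∀ g : G, ∃ c : ℂ, ∀ x : V, Aop g x = c • x := by
    intro g
    haveI hn : IsStarNormal (Aop g) := ⟨by rw [hA_star]; exact hA_comm g⁻¹ g⟩
    obtain ⟨c, hc⟩ := scalar_of_commuting_irreducible Aop (Aop g)
      (fun g' => hA_comm g' g) (fun g' => by rw [hA_star]; exact hA_comm g' g⁻¹)
      (fun W hWc hWne hWinv => key W hWc hWne hWinv)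
    refine ⟨c, fun x => ?_⟩
    rw [hc]
    simp [Algebra.algebraMap_eq_smul_one]
  -- conclude
  set W0 : Submodule ℂ V := Submodule.span ℂ {v0} with hW0def
  haveI : FiniteDimensional ℂ W0 := by
    apply FiniteDimensional.span_of_finite
    exact Set.finite_singleton v0
  have hW0c : IsClosed (W0 : Set V) := Submodule.closed_of_finiteDimensional W0
  have hW0ne : W0 ≠ ⊥ := by
    rw [hW0def, Submodule.span_singleton_eq_bot.ne]
    exact hv0
  have hW0inv : ∀ g : G, ∀ w ∈ W0, Aop g w ∈ W0 := by
    intro g w hw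
    obtain ⟨c, hc⟩ := hscalar g
    rw [hc w]
    exact W0.smul_mem c hw
  have htop := key W0 hW0c hW0ne hW0inv
  calc Module.rank ℂ V = Module.rank ℂ (⊤ : Submodule ℂ V) := (rank_top ℂ V).symm
    _ = Module.rank ℂ W0 := by rw [htop]
    _ ≤ #({v0} : Set V) := rank_span_le _
    _ = 1 := Cardinal.mk_singleton _
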